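/- Splitting Lemma: Let Q : ℝ → [0,∞) be strictly convex and even, 0 < ε̃ < ε, and 0 < δ < min(1/2, 1 − Q(ε̃)/Q(ε)). If φ is a measurable function on J = [a,b] with W(φ,J) ≤ Q(ε̃), then there exists t ∈ (δ, 1−δ) such that, writing J₋ = [a, (1−t)a+tb], J₊ = [(1−t)a+tb, b], and φ± = φ restricted to J±, the α-concatenation φ_α satisfies V(φ_α, [0,1]) ≤ Q(ε) for all α ∈ [0,1]. -/

import Mathlib

open MeasureTheory Set Filter Topology
open scoped ENNReal

noncomputable section

/-- Lebesgue average of a (nonnegative-valued, via `ENNReal.ofReal`) function over `J`. -/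
def avg (J : Set ℝ) (f : ℝ → ℝ) : ℝ≥0∞ :=
  (volume J)⁻¹ * ∫⁻ x in J, ENNReal.ofReal (f x)

/-- `V_c(φ, J) = ⟨Q(φ - c)⟩_J`. -/
def Vc (Q φ : ℝ → ℝ) (J : Set ℝ) (c : ℝ) : ℝ≥0∞ :=
  avg J (fun x => Q (φ x - c))

/-- `V(φ, J) = inf_c V_c(φ, J)`. -/
def V (Q φ : ℝ → ℝ) (J : Set ℝ) : ℝ≥0∞ :=
  ⨅ c : ℝ, Vc Q φ J c

/-- `W(φ, J) = sup { V(φ, L) : L ⊆ J an interval }`. -/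
def W (Q φ : ℝ → ℝ) (J : Set ℝ) : ℝ≥0∞ :=
  ⨆ (a : ℝ) (b : ℝ) (_ : Icc a b ⊆ J), V Q φ (Icc a b)

/-- Decreasing rearrangement of `f : [0,1] → ℝ`:
`f*(t) = inf {λ : |{s ∈ [0,1] : f(s) > λ}| ≤ t}`. -/
def decRe (f : ℝ → ℝ) (t : ℝ) : ℝ :=
  sInf {l : ℝ | volume {s ∈ Icc (0:ℝ) 1 | l < f s} ≤ ENNReal.ofReal t}

/-- `𝒞(φ, J)`: the minimizer of `c ↦ V_c(φ, J)` (when it exists). -/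
def CC (Q φ : ℝ → ℝ) (J : Set ℝ) : ℝ :=
  Classical.epsilon (fun c => ∀ c', Vc Q φ J c ≤ Vc Q φ J c')

/-- `α`-concatenation of `φ₋ : [a₋,b₋] → ℝ` and `φ₊ : [a₊,b₊] → ℝ`, as a function on `[0,1]`. -/
def concat (φm φp : ℝ → ℝ) (am bm ap bp α : ℝ) : ℝ → ℝ :=
  fun s => if s < α then φm (am + (bm - am) * (s / α))
           else φp (ap + (bp - ap) * ((s - α) / (1 - α)))

set_option maxHeartbeats 1000000

lemma cancel3 (x y z : ℝ≥0∞) (h0 : x ≠ 0) (ht : x ≠ ⊤) : y * x⁻¹ * (z * x) = y * z := by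
  rw [mul_comm z x, ← mul_assoc, mul_assoc y, ENNReal.inv_mul_cancel h0 ht, mul_one]

lemma covA (f : ℝ → ℝ≥0∞) (hf : Measurable f) (u L : ℝ) (hL : 0 < L) :
    ∫⁻ x in Ioo u (u + L), f x = ENNReal.ofReal L * ∫⁻ y in Ioo (0:ℝ) 1, f (u + L * y) := by
  have he : Measurable (fun y : ℝ => u + L * y) := by fun_prop
  have hmap : Measure.map (fun y : ℝ => u + L * y) volume
      = ENNReal.ofReal |L⁻¹| • volume := by
    have : (fun y : ℝ => u + L * y) = (fun x : ℝ => u + x) ∘ (fun y : ℝ => L * y) := rfl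
    rw [this, ← Measure.map_map (by fun_prop) (by fun_prop), Real.map_volume_mul_left hL.ne',
      Measure.map_smul, map_add_left_eq_self]
  have hind : ∀ y : ℝ, (Ioo u (u+L)).indicator f (u + L * y)
      = (Ioo (0:ℝ) 1).indicator (fun y => f (u + L * y)) y := by
    intro y
    by_cases hy : y ∈ Ioo (0:ℝ) 1
    · rw [indicator_of_mem hy, indicator_of_mem]
      exact ⟨by nlinarith [hy.1, hy.2], by nlinarith [hy.1, hy.2]⟩
    · rw [indicator_of_notMem hy, indicator_of_notMem]
      intro hmem
      exact hy ⟨by nlinarith [hmem.1, hmem.2], by nlinarith [hmem.1, hmem.2]⟩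
  calc ∫⁻ x in Ioo u (u + L), f x = ∫⁻ x, (Ioo u (u+L)).indicator f x := by
        rw [lintegral_indicator measurableSet_Ioo]
    _ = (∫⁻ x, (Ioo u (u+L)).indicator f x
          ∂(Measure.map (fun y : ℝ => u + L * y) volume)) * ENNReal.ofReal L := by
        rw [hmap]
        simp only [lintegral_smul_measure, smul_eq_mul]
        rw [mul_comm, ← mul_assoc, ← ENNReal.ofReal_mul (le_of_lt hL)]
        rw [abs_of_pos (inv_pos.mpr hL), mul_inv_cancel₀ hL.ne', ENNReal.ofReal_one, one_mul]
    _ = (∫⁻ y, (Ioo (0:ℝ) 1).indicator (fun y => f (u + L * y)) y) * ENNReal.ofReal L := by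
        rw [lintegral_map (hf.indicator measurableSet_Ioo) he]
        congr 1
        exact lintegral_congr hind
    _ = ENNReal.ofReal L * ∫⁻ y in Ioo (0:ℝ) 1, f (u + L * y) := by
        rw [lintegral_indicator measurableSet_Ioo, mul_comm]

lemma covB (F : ℝ → ℝ≥0∞) (hF : Measurable F) (β p : ℝ) (hp : 0 < p) :
    ∫⁻ s in Ioo β (β + p), F ((s - β)/p) = ENNReal.ofReal p * ∫⁻ y in Ioo (0:ℝ) 1, F y := by
  have hm : Measurable (fun s : ℝ => F ((s - β)/p)) := hF.comp (by fun_prop)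
  rw [covA (fun s => F ((s - β)/p)) hm β p hp]
  congr 1
  refine lintegral_congr fun y => ?_
  congr 1
  field_simp
  ring

lemma covC (f : ℝ → ℝ≥0∞) (hf : Measurable f) (u L β p : ℝ) (hp : 0 < p) (hL : 0 < L) :
    ∫⁻ s in Ioo β (β + p), f (u + L * ((s - β)/p))
      = ENNReal.ofReal p * (ENNReal.ofReal L)⁻¹ * ∫⁻ x in Ioo u (u + L), f x := by
  rw [covB (fun y => f (u + L * y)) (hf.comp (by fun_prop)) β p hp]
  rw [covA f hf u L hL, mul_assoc, ← mul_assoc (ENNReal.ofReal L)⁻¹,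
    ENNReal.inv_mul_cancel (by simpa using hL) ENNReal.ofReal_ne_top, one_mul]

theorem stmt5 (Q : ℝ → ℝ) (hQ : StrictConvexOn ℝ univ Q) (hQe : ∀ t, Q (-t) = Q t)
    (hQ0 : ∀ t, 0 ≤ Q t) (ε' ε δ : ℝ) (h1 : 0 < ε') (h2 : ε' < ε)
    (hδ0 : 0 < δ) (hδ : δ < min (1/2) (1 - Q ε' / Q ε))
    (φ : ℝ → ℝ) (hφ : Measurable φ) (a b : ℝ) (hab : a < b)
    (hW : W Q φ (Icc a b) ≤ ENNReal.ofReal (Q ε')) :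
    ∃ t ∈ Ioo δ (1 - δ), ∀ α ∈ Icc (0:ℝ) 1,
      V Q (concat φ φ a ((1 - t)*a + t*b) ((1 - t)*a + t*b) b α) (Icc (0:ℝ) 1)
        ≤ ENNReal.ofReal (Q ε) := by
  have hε : 0 < ε := lt_trans h1 h2
  -- Q ε' < Q ε
  have hQlt : Q ε' < Q ε := by
    set θ := (ε - ε')/(2*ε) with hθdef
    have hθ0 : 0 < θ := div_pos (by linarith) (by linarith)
    have hθ1 : θ < 1 := by rw [hθdef, div_lt_one (by linarith)]; linarith
    have hne : (-ε) ≠ ε := by intro hcon; linarith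
    have hkey := hQ.2 (mem_univ (-ε)) (mem_univ ε) hne hθ0 (by linarith : (0:ℝ) < 1 - θ)
      (by ring)
    simp only [smul_eq_mul] at hkey
    have hpt : θ * (-ε) + (1 - θ) * ε = ε' := by
      rw [hθdef]; field_simp; ring
    rw [hpt, hQe] at hkey
    calc Q ε' < θ * Q ε + (1 - θ) * Q ε := hkey
      _ = Q ε := by ring
  set M := Q ε with hMdef
  have hM : 0 < M := lt_of_le_of_lt (hQ0 ε') hQlt
  -- the split point parameter
  set δ' := (δ + min (1/2) (1 - Q ε' / M))/2 with hδ'def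
  have hδ'1 : δ < δ' := by
    rw [hδ'def]; linarith [hδ]
  have hδ'2 : δ' < 1/2 := by
    have := min_le_left (1/2 : ℝ) (1 - Q ε' / M)
    rw [hδ'def]; cases' lt_min_iff.mp hδ with l r; linarith
  have hδ'r : δ' < 1 - Q ε' / M := by
    have := min_le_right (1/2 : ℝ) (1 - Q ε' / M)
    rw [hδ'def]; cases' lt_min_iff.mp hδ with l r; linarith
  have hδ'0 : 0 < δ' := lt_trans hδ0 hδ'1
  set K := M * (1 - δ') with hKdef
  have hK1 : Q ε' < K := by
    have : Q ε' / M < 1 - δ' := by linarith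
    calc Q ε' = (Q ε' / M) * M := by field_simp
      _ < (1 - δ') * M := by
          apply mul_lt_mul_of_pos_right this hM
      _ = K := by rw [hKdef]; ring
  have hK2 : K ≤ M := by nlinarith
  have hK0 : 0 < K := lt_of_le_of_lt (hQ0 ε') hK1
  -- get a good constant c
  have hVle : V Q φ (Icc a b) ≤ W Q φ (Icc a b) :=
    le_iSup_of_le a (le_iSup_of_le b (le_iSup_of_le (subset_refl _) le_rfl))
  have hVK : V Q φ (Icc a b) < ENNReal.ofReal K :=
    lt_of_le_of_lt (le_trans hVle hW) ((ENNReal.ofReal_lt_ofReal_iff hK0).mpr hK1)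
  obtain ⟨c, hc⟩ := iInf_lt_iff.mp hVK
  -- notation
  set g : ℝ → ℝ := fun x => Q (φ x - c) with hgdef
  have hQcont : Continuous Q := by
    have h := hQ.convexOn.continuousOn isOpen_univ
    exact continuousOn_univ.mp h
  have hgm : Measurable g := hQcont.measurable.comp (hφ.sub_const c)
  have hg0 : ∀ x, 0 ≤ g x := fun x => hQ0 _
  set f : ℝ → ℝ≥0∞ := fun x => ENNReal.ofReal (g x) with hfdef
  have hfm : Measurable f := ENNReal.measurable_ofReal.comp hgm
  have hba : (0:ℝ) < b - a := by linarith
  -- integral over the whole interval is small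
  have hIJ : ∫⁻ x in Icc a b, f x ≤ ENNReal.ofReal K * ENNReal.ofReal (b - a) := by
    have h0 : (ENNReal.ofReal (b-a)) ≠ 0 := by simpa using hba
    have ht : (ENNReal.ofReal (b-a)) ≠ ∞ := ENNReal.ofReal_ne_top
    have hc' : (volume (Icc a b))⁻¹ * ∫⁻ x in Icc a b, f x ≤ ENNReal.ofReal K := le_of_lt hc
    rw [Real.volume_Icc] at hc'
    calc ∫⁻ x in Icc a b, f x
        = ENNReal.ofReal (b-a) * ((ENNReal.ofReal (b-a))⁻¹ * ∫⁻ x in Icc a b, f x) := by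
          rw [← mul_assoc, ENNReal.mul_inv_cancel h0 ht, one_mul]
      _ ≤ ENNReal.ofReal (b-a) * ENNReal.ofReal K := mul_le_mul_right hc' _
      _ = ENNReal.ofReal K * ENNReal.ofReal (b - a) := mul_comm _ _
  have hgint : IntegrableOn g (Icc a b) := by
    refine ⟨hgm.aestronglyMeasurable, ?_⟩
    rw [hasFiniteIntegral_iff_ofReal (ae_of_all _ hg0)]
    exact lt_of_le_of_lt hIJ (by finiteness)
  set G : ℝ → ℝ := (Icc a b).indicator g with hGdef
  have hGint : Integrable G := (integrable_indicator_iff measurableSet_Icc).mpr hgint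
  have hG0 : ∀ x, 0 ≤ G x := fun x => indicator_nonneg (fun y _ => hg0 y) x
  set m : ℝ → ℝ := fun t => (1 - t)*a + t*b with hmdef
  set F : ℝ → ℝ := fun t => ∫ x in a..(m t), G x with hFdef
  have hm1 : m 1 = b := by rw [hmdef]; ring_nf
  have hmt : ∀ t : ℝ, m t = (1 - t)*a + t*b := fun _ => rfl
  have hmbd : ∀ t : ℝ, 0 ≤ t → t ≤ 1 → a ≤ m t ∧ m t ≤ b := by
    intro t h0 h1'
    rw [hmt]
    have h1 := mul_nonneg h0 (le_of_lt hba)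
    have h2 := mul_nonneg (by linarith : (0:ℝ) ≤ 1 - t) (le_of_lt hba)
    constructor
    · nlinarith [h1]
    · nlinarith [h2]
  -- conversion between interval integral of G and lintegral of f
  have heq : ∀ u v : ℝ, a ≤ u → u ≤ v → v ≤ b →
      ENNReal.ofReal (∫ x in u..v, G x) = ∫⁻ x in Ioc u v, f x := by
    intro u v hau huv hvb
    have hsub : Ioc u v ⊆ Icc a b := fun x hx => ⟨le_trans hau hx.1.le, le_trans hx.2 hvb⟩
    have h1 : ∫ x in u..v, G x = ∫ x in Ioc u v, g x := by
      rw [intervalIntegral.integral_of_le huv]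
      exact setIntegral_congr_fun measurableSet_Ioc (fun x hx => indicator_of_mem (hsub hx) g)
    rw [h1, ofReal_integral_eq_lintegral_ofReal (hgint.mono_set hsub) (ae_of_all _ hg0)]
  have hFcont : Continuous F := by
    rw [hFdef]
    exact (hGint.continuous_primitive a).comp (by fun_prop)
  -- F 1 bound
  have hF1 : F 1 ≤ K * (b - a) := by
    rw [← ENNReal.ofReal_le_ofReal_iff (by positivity)]
    rw [hFdef]
    simp only [hm1]
    rw [heq a b le_rfl (le_of_lt hab) le_rfl]
    calc ∫⁻ x in Ioc a b, f x ≤ ∫⁻ x in Icc a b, f x := lintegral_mono_set Ioc_subset_Icc_self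
      _ ≤ ENNReal.ofReal K * ENNReal.ofReal (b - a) := hIJ
      _ = ENNReal.ofReal (K * (b-a)) := (ENNReal.ofReal_mul (le_of_lt hK0)).symm
  -- splitting of F
  have hsplit : ∀ t : ℝ, 0 ≤ t → t ≤ 1 → F t + ∫ x in (m t)..b, G x = F 1 := by
    intro t h0 h1'
    rw [hFdef]
    simp only [hm1]
    exact intervalIntegral.integral_add_adjacent_intervals
      hGint.intervalIntegrable hGint.intervalIntegrable
  have hRnn : ∀ t : ℝ, 0 ≤ t → t ≤ 1 → 0 ≤ ∫ x in (m t)..b, G x := by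
    intro t h0 h1'
    exact intervalIntegral.integral_nonneg (hmbd t h0 h1').2 (fun x _ => hG0 x)
  have hFnn : ∀ t : ℝ, 0 ≤ t → t ≤ 1 → 0 ≤ F t := by
    intro t h0 h1'
    exact intervalIntegral.integral_nonneg (hmbd t h0 h1').1 (fun x _ => hG0 x)
  -- find the splitting point t
  obtain ⟨t, ht1, ht2, htF, htR⟩ : ∃ t : ℝ, δ' ≤ t ∧ t ≤ 1 - δ' ∧
      F t ≤ M * t * (b-a) ∧ F 1 - F t ≤ M * (1-t) * (b-a) := by
    have hd1 : δ' ≤ 1 - δ' := by linarith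
    have hdIcc : δ' ∈ Icc δ' (1 - δ') := ⟨le_rfl, hd1⟩
    by_cases hcase : F δ' ≤ M * δ' * (b-a)
    · refine ⟨δ', le_rfl, hd1, hcase, ?_⟩
      have hF0 : 0 ≤ F δ' := hFnn δ' (le_of_lt hδ'0) (by linarith)
      have : F 1 - F δ' ≤ K * (b - a) := by linarith
      calc F 1 - F δ' ≤ K * (b-a) := this
        _ = M * (1 - δ') * (b-a) := by rw [hKdef]
    · push_neg at hcase
      have hψcont : ContinuousOn (fun t => F t - M * t * (b-a)) (Icc δ' (1-δ')) :=
        (hFcont.sub (by fun_prop)).continuousOn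
      have hψb : F (1-δ') - M * (1-δ') * (b-a) ≤ 0 := by
        have h1 : F (1-δ') ≤ F 1 := by
          have := hsplit (1-δ') (by linarith) (by linarith)
          have := hRnn (1-δ') (by linarith) (by linarith)
          linarith
        have : F 1 ≤ M * (1-δ') * (b-a) := by
          calc F 1 ≤ K * (b-a) := hF1
            _ = M * (1-δ') * (b-a) := by rw [hKdef]
        linarith
      have h0mem : (0:ℝ) ∈ Icc (F (1-δ') - M * (1-δ') * (b-a)) (F δ' - M * δ' * (b-a)) :=
        ⟨hψb, by linarith⟩
      obtain ⟨t, htmem, hψt⟩ := intermediate_value_Icc' hd1 hψcont h0mem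
      have hψt' : F t - M * t * (b-a) = 0 := hψt
      refine ⟨t, htmem.1, htmem.2, le_of_eq (by linarith), ?_⟩
      have hFt : F t = M * t * (b-a) := by linarith
      have : F 1 ≤ K * (b-a) := hF1
      have hKM : K * (b-a) ≤ M * (b-a) := by nlinarith
      rw [hFt]
      calc F 1 - M * t * (b-a) ≤ M * (b-a) - M * t * (b-a) := by linarith
        _ = M * (1-t) * (b-a) := by ring
  -- the two lintegral bounds
  have ht0 : 0 < t := lt_of_lt_of_le hδ'0 ht1
  have ht1' : t < 1 := by linarith
  set m0 := m t with hm0def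
  have hm0eq' : m0 = (1 - t)*a + t*b := hmt t
  have ham0 : a < m0 := by
    have h := mul_pos ht0 hba
    rw [hm0eq']; linarith [h]
  have hm0b : m0 < b := by
    have h := mul_pos (by linarith : (0:ℝ) < 1 - t) hba
    rw [hm0eq']; nlinarith [h]
  have hLm : m0 - a = t * (b-a) := by rw [hm0eq']; ring
  have hLp : b - m0 = (1-t) * (b-a) := by rw [hm0eq']; ring
  have hL : ∫⁻ x in Ioo a m0, f x ≤ ENNReal.ofReal M * ENNReal.ofReal (m0 - a) := by
    calc ∫⁻ x in Ioo a m0, f x ≤ ∫⁻ x in Ioc a m0, f x := lintegral_mono_set Ioo_subset_Ioc_self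
      _ = ENNReal.ofReal (F t) := (heq a m0 le_rfl (le_of_lt ham0) (le_of_lt hm0b)).symm
      _ ≤ ENNReal.ofReal (M * (m0 - a)) := by
          apply ENNReal.ofReal_le_ofReal; rw [hLm]; linarith [htF]
      _ = ENNReal.ofReal M * ENNReal.ofReal (m0 - a) := ENNReal.ofReal_mul (le_of_lt hM)
  have hR : ∫⁻ x in Ioo m0 b, f x ≤ ENNReal.ofReal M * ENNReal.ofReal (b - m0) := by
    have hsp := hsplit t (le_of_lt ht0) (le_of_lt ht1')
    calc ∫⁻ x in Ioo m0 b, f x ≤ ∫⁻ x in Ioc m0 b, f x := lintegral_mono_set Ioo_subset_Ioc_self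
      _ = ENNReal.ofReal (∫ x in m0..b, G x) :=
          (heq m0 b (le_of_lt ham0) (le_of_lt hm0b) le_rfl).symm
      _ ≤ ENNReal.ofReal (M * (b - m0)) := by
          apply ENNReal.ofReal_le_ofReal; rw [hLp]; linarith [htR]
      _ = ENNReal.ofReal M * ENNReal.ofReal (b - m0) := ENNReal.ofReal_mul (le_of_lt hM)
  -- conclusion
  refine ⟨t, ⟨lt_of_lt_of_le hδ'1 ht1, lt_of_le_of_lt ht2 (by linarith)⟩, ?_⟩
  intro α hα
  have hVca : V Q (concat φ φ a ((1 - t)*a + t*b) ((1 - t)*a + t*b) b α) (Icc (0:ℝ) 1)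
      ≤ Vc Q (concat φ φ a ((1 - t)*a + t*b) ((1 - t)*a + t*b) b α) (Icc (0:ℝ) 1) c :=
    iInf_le _ c
  refine le_trans hVca ?_
  have hm0eq : (1 - t)*a + t*b = m0 := hm0eq'.symm
  rw [hm0eq]
  show avg (Icc (0:ℝ) 1) (fun s => Q (concat φ φ a m0 m0 b α s - c)) ≤ ENNReal.ofReal M
  set h : ℝ → ℝ≥0∞ := fun s => ENNReal.ofReal (Q (concat φ φ a m0 m0 b α s - c)) with hhdef
  have havg : avg (Icc (0:ℝ) 1) (fun s => Q (concat φ φ a m0 m0 b α s - c))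
      = ∫⁻ s in Icc (0:ℝ) 1, h s := by
    rw [avg, Real.volume_Icc]
    norm_num
    rfl
  rw [havg]
  -- bound on the left piece
  have hleft : ∫⁻ s in Ioo (0:ℝ) α, h s ≤ ENNReal.ofReal α * ENNReal.ofReal M := by
    rcases eq_or_lt_of_le hα.1 with h0|h0
    · rw [← h0]; simp
    · have hcong : ∫⁻ s in Ioo (0:ℝ) α, h s
          = ∫⁻ s in Ioo (0:ℝ) (0 + α), f (a + (m0 - a) * ((s - 0)/α)) := by
        rw [zero_add]
        refine setLIntegral_congr_fun measurableSet_Ioo (fun s hs => ?_)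
        rw [hhdef]
        simp only [concat, if_pos hs.2, sub_zero, hfdef, hgdef]
      rw [hcong, covC f hfm a (m0 - a) 0 α h0 (by linarith)]
      have : a + (m0 - a) = m0 := by ring
      rw [this]
      calc ENNReal.ofReal α * (ENNReal.ofReal (m0-a))⁻¹ * ∫⁻ x in Ioo a m0, f x
          ≤ ENNReal.ofReal α * (ENNReal.ofReal (m0-a))⁻¹ *
            (ENNReal.ofReal M * ENNReal.ofReal (m0 - a)) := by
            exact mul_le_mul_right hL _
        _ = ENNReal.ofReal α * ENNReal.ofReal M :=
            cancel3 _ _ _ (by simpa using sub_pos.mpr ham0) ENNReal.ofReal_ne_top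
  have hright : ∫⁻ s in Ioo α 1, h s ≤ ENNReal.ofReal (1 - α) * ENNReal.ofReal M := by
    rcases eq_or_lt_of_le hα.2 with h0|h0
    · rw [h0]; simp
    · have hcong : ∫⁻ s in Ioo α 1, h s
          = ∫⁻ s in Ioo α (α + (1 - α)), f (m0 + (b - m0) * ((s - α)/(1-α))) := by
        rw [show α + (1 - α) = 1 by ring]
        refine setLIntegral_congr_fun measurableSet_Ioo (fun s hs => ?_)
        rw [hhdef]
        simp only [concat, if_neg (not_lt.mpr (le_of_lt hs.1)), hfdef, hgdef]
      rw [hcong, covC f hfm m0 (b - m0) α (1-α) (by linarith) (by linarith)]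
      have : m0 + (b - m0) = b := by ring
      rw [this]
      calc ENNReal.ofReal (1-α) * (ENNReal.ofReal (b-m0))⁻¹ * ∫⁻ x in Ioo m0 b, f x
          ≤ ENNReal.ofReal (1-α) * (ENNReal.ofReal (b-m0))⁻¹ *
            (ENNReal.ofReal M * ENNReal.ofReal (b - m0)) := by
            exact mul_le_mul_right hR _
        _ = ENNReal.ofReal (1-α) * ENNReal.ofReal M :=
            cancel3 _ _ _ (by simpa using sub_pos.mpr hm0b) ENNReal.ofReal_ne_top
  have hsub : Icc (0:ℝ) 1 ⊆ (Ioo 0 α ∪ Ioo α 1) ∪ ({0, α, 1} : Set ℝ) := by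
    intro s hs
    rcases eq_or_ne s 0 with h0|h0
    · right; simp [h0]
    rcases eq_or_ne s 1 with h1'|h1'
    · right; simp [h1']
    rcases lt_trichotomy s α with hlt|heqα|hgt
    · left; left; exact ⟨lt_of_le_of_ne hs.1 (Ne.symm h0), hlt⟩
    · right; simp [heqα]
    · left; right; exact ⟨hgt, lt_of_le_of_ne hs.2 h1'⟩
  calc ∫⁻ s in Icc (0:ℝ) 1, h s
      ≤ ∫⁻ s in (Ioo 0 α ∪ Ioo α 1) ∪ ({0, α, 1} : Set ℝ), h s := lintegral_mono_set hsub
    _ ≤ (∫⁻ s in Ioo 0 α ∪ Ioo α 1, h s) + ∫⁻ s in ({0, α, 1} : Set ℝ), h s :=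
        lintegral_union_le _ _ _
    _ ≤ ((∫⁻ s in Ioo (0:ℝ) α, h s) + ∫⁻ s in Ioo α 1, h s) + 0 := by
        gcongr
        · exact lintegral_union_le _ _ _
        · rw [setLIntegral_measure_zero]
          exact ((Set.finite_singleton _).insert _).insert _ |>.measure_zero _
    _ ≤ (ENNReal.ofReal α * ENNReal.ofReal M + ENNReal.ofReal (1-α) * ENNReal.ofReal M) + 0 := by
        gcongr
    _ = ENNReal.ofReal M := by
        rw [add_zero, ← ENNReal.ofReal_mul hα.1, ← ENNReal.ofReal_mul (by linarith [hα.2]),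
          ← ENNReal.ofReal_add (by nlinarith [hα.1, hQ0 ε] : (0:ℝ) ≤ α * M)
            (by nlinarith [hα.2, hQ0 ε] : (0:ℝ) ≤ (1-α) * M)]
        congr 1
        ring
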